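/- Let x₁, x₂, x₃ : ℝ → ℝ be three solutions of the Riccati equation dx/dt = a₀(t) + a₁(t)x + a₂(t)x², pairwise distinct at every time, and let k ∈ ℝ be such that the denominators below never vanish. Then x(t) = [x₁(t)(x₃(t)−x₂(t)) + k x₃(t)(x₁(t)−x₂(t))] / [(x₃(t)−x₂(t)) + k(x₁(t)−x₂(t))] is also a solution of the same Riccati equation. -/

import Mathlib

/-- superposition rule for Riccati equations. Given three solutions of
x' = a₀(t) + a₁(t)x + a₂(t)x², pairwise distinct at every time, and a constant k for which
the denominator never vanishes, the combination
x = (x₁(x₃−x₂) + k x₃(x₁−x₂)) / ((x₃−x₂) + k(x₁−x₂)) is again a solution. -/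
theorem riccati_superposition_rule
    (a₀ a₁ a₂ : ℝ → ℝ) (ha₀ : Continuous a₀) (ha₁ : Continuous a₁) (ha₂ : Continuous a₂)
    (x₁ x₂ x₃ : ℝ → ℝ)
    (hx₁ : ∀ t, HasDerivAt x₁ (a₀ t + a₁ t * x₁ t + a₂ t * (x₁ t) ^ 2) t)
    (hx₂ : ∀ t, HasDerivAt x₂ (a₀ t + a₁ t * x₂ t + a₂ t * (x₂ t) ^ 2) t)
    (hx₃ : ∀ t, HasDerivAt x₃ (a₀ t + a₁ t * x₃ t + a₂ t * (x₃ t) ^ 2) t)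
    (hdist : ∀ t, x₁ t ≠ x₂ t ∧ x₁ t ≠ x₃ t ∧ x₂ t ≠ x₃ t)
    (k : ℝ)
    (hden : ∀ t, (x₃ t - x₂ t) + k * (x₁ t - x₂ t) ≠ 0)
    (x : ℝ → ℝ)
    (hx : ∀ t, x t = (x₁ t * (x₃ t - x₂ t) + k * x₃ t * (x₁ t - x₂ t)) /
        ((x₃ t - x₂ t) + k * (x₁ t - x₂ t))) :
    ∀ t, HasDerivAt x (a₀ t + a₁ t * x t + a₂ t * (x t) ^ 2) t := by
  have hxfun : x = fun t => (x₁ t * (x₃ t - x₂ t) + k * x₃ t * (x₁ t - x₂ t)) /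
      ((x₃ t - x₂ t) + k * (x₁ t - x₂ t)) := funext hx
  intro t
  have d₁ := hx₁ t
  have d₂ := hx₂ t
  have d₃ := hx₃ t
  have hN : HasDerivAt (fun t => x₁ t * (x₃ t - x₂ t) + k * x₃ t * (x₁ t - x₂ t))
      ((a₀ t + a₁ t * x₁ t + a₂ t * (x₁ t) ^ 2) * (x₃ t - x₂ t) +
        x₁ t * ((a₀ t + a₁ t * x₃ t + a₂ t * (x₃ t) ^ 2) -
          (a₀ t + a₁ t * x₂ t + a₂ t * (x₂ t) ^ 2)) +
        ((k * (a₀ t + a₁ t * x₃ t + a₂ t * (x₃ t) ^ 2)) * (x₁ t - x₂ t) +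
          (k * x₃ t) * ((a₀ t + a₁ t * x₁ t + a₂ t * (x₁ t) ^ 2) -
            (a₀ t + a₁ t * x₂ t + a₂ t * (x₂ t) ^ 2)))) t :=
    (d₁.mul (d₃.sub d₂)).add ((d₃.const_mul k).mul (d₁.sub d₂))
  have hD : HasDerivAt (fun t => (x₃ t - x₂ t) + k * (x₁ t - x₂ t))
      (((a₀ t + a₁ t * x₃ t + a₂ t * (x₃ t) ^ 2) - (a₀ t + a₁ t * x₂ t + a₂ t * (x₂ t) ^ 2)) +
        k * ((a₀ t + a₁ t * x₁ t + a₂ t * (x₁ t) ^ 2) -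
          (a₀ t + a₁ t * x₂ t + a₂ t * (x₂ t) ^ 2))) t :=
    (d₃.sub d₂).add ((d₁.sub d₂).const_mul k)
  have hq := hN.div hD (hden t)
  rw [hxfun]
  refine HasDerivAt.congr_deriv hq ?_
  have hd := hden t
  beta_reduce
  field_simp
  ring
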